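/- Over PA (with T an arbitrary fresh unary predicate), the scheme IΔ₀(T) of Δ₀-induction for formulas containing T implies SeqOInd, and SeqOInd implies SeqInd. -/

import Mathlib

/- Abstract formalization of "Disjunctive correctness half-way"-style results on
   compositional truth over PA.  Models of PA are given by `PAStruct` together with
   `ModelOfPA` (full first-order induction via a deep embedding of L_PA-formulas).
   The internal (Gödel-coded, possibly nonstandard) syntax of a model is packaged in
   the structure `Coding`, whose fields are the arithmetically (Δ₀-)definable coding
   functions together with their basic PA-provable properties. -/

namespace CTPaper

/-- Terms of the arithmetical language L_PA = {0, S, +, ×}, variables indexed by ℕ. -/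
inductive Trm : Type
  | var : ℕ → Trm
  | zero : Trm
  | succ : Trm → Trm
  | add : Trm → Trm → Trm
  | mul : Trm → Trm → Trm

/-- First-order formulas of L_PA. -/
inductive Fml : Type
  | eq : Trm → Trm → Fml
  | not : Fml → Fml
  | or : Fml → Fml → Fml
  | and : Fml → Fml → Fml
  | ex : ℕ → Fml → Fml
  | all : ℕ → Fml → Fml

/-- Δ₀ (bounded) formulas of L_PA. -/
inductive Fml0 : Type
  | eq : Trm → Trm → Fml0
  | not : Fml0 → Fml0
  | or : Fml0 → Fml0 → Fml0
  | and : Fml0 → Fml0 → Fml0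
  | bex : ℕ → Trm → Fml0 → Fml0
  | ball : ℕ → Trm → Fml0 → Fml0

/-- Δ₀ (bounded) formulas of the language L_PA ∪ {T}, T a fresh unary predicate. -/
inductive TFml0 : Type
  | eq : Trm → Trm → TFml0
  | tr : Trm → TFml0
  | not : TFml0 → TFml0
  | or : TFml0 → TFml0 → TFml0
  | and : TFml0 → TFml0 → TFml0
  | bex : ℕ → Trm → TFml0 → TFml0
  | ball : ℕ → Trm → TFml0 → TFml0

/-- Formulas of the language L_PA ∪ {T}. -/
inductive TFml : Type
  | eq : Trm → Trm → TFml
  | tr : Trm → TFml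
  | not : TFml → TFml
  | or : TFml → TFml → TFml
  | and : TFml → TFml → TFml
  | ex : ℕ → TFml → TFml
  | all : ℕ → TFml → TFml

/-- Formulas of L_PA extended by a family of fresh unary predicates indexed by `P`. -/
inductive FmlX (P : Type) : Type
  | eq : Trm → Trm → FmlX P
  | pat : P → Trm → FmlX P
  | not : FmlX P → FmlX P
  | or : FmlX P → FmlX P → FmlX P
  | and : FmlX P → FmlX P → FmlX P
  | ex : ℕ → FmlX P → FmlX P
  | all : ℕ → FmlX P → FmlX P

def Trm.fv : Trm → Set ℕ
  | .var n => {n}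
  | .zero => ∅
  | .succ t => t.fv
  | .add t u => t.fv ∪ u.fv
  | .mul t u => t.fv ∪ u.fv

def Fml.fv : Fml → Set ℕ
  | .eq t u => t.fv ∪ u.fv
  | .not φ => φ.fv
  | .or φ ψ => φ.fv ∪ ψ.fv
  | .and φ ψ => φ.fv ∪ ψ.fv
  | .ex n φ => φ.fv \ {n}
  | .all n φ => φ.fv \ {n}

/-- An L_PA-sentence: a formula with no free variables. -/
def Fml.Closed (φ : Fml) : Prop := Fml.fv φ = ∅

/-- A structure for the language L_PA. -/
structure PAStruct where
  M : Type
  zero : M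
  succ : M → M
  add : M → M → M
  mul : M → M → M

def PAStruct.evalT (N : PAStruct) (v : ℕ → N.M) : Trm → N.M
  | .var n => v n
  | .zero => N.zero
  | .succ t => N.succ (N.evalT v t)
  | .add t u => N.add (N.evalT v t) (N.evalT v u)
  | .mul t u => N.mul (N.evalT v t) (N.evalT v u)

/-- The (definable) ordering of the model. -/
def PAStruct.le (N : PAStruct) (a b : N.M) : Prop := ∃ c, N.add a c = b

def PAStruct.lt (N : PAStruct) (a b : N.M) : Prop := N.le (N.succ a) b

/-- Tarskian satisfaction for L_PA-formulas. -/
def PAStruct.Sat (N : PAStruct) : (ℕ → N.M) → Fml → Prop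
  | v, .eq t u => N.evalT v t = N.evalT v u
  | v, .not φ => ¬ N.Sat v φ
  | v, .or φ ψ => N.Sat v φ ∨ N.Sat v ψ
  | v, .and φ ψ => N.Sat v φ ∧ N.Sat v ψ
  | v, .ex n φ => ∃ a, N.Sat (Function.update v n a) φ
  | v, .all n φ => ∀ a, N.Sat (Function.update v n a) φ

/-- Satisfaction for Δ₀ formulas of L_PA. -/
def PAStruct.Sat0 (N : PAStruct) : (ℕ → N.M) → Fml0 → Prop
  | v, .eq t u => N.evalT v t = N.evalT v u
  | v, .not φ => ¬ N.Sat0 v φ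
  | v, .or φ ψ => N.Sat0 v φ ∨ N.Sat0 v ψ
  | v, .and φ ψ => N.Sat0 v φ ∧ N.Sat0 v ψ
  | v, .bex n t φ => ∃ a, N.le a (N.evalT v t) ∧ N.Sat0 (Function.update v n a) φ
  | v, .ball n t φ => ∀ a, N.le a (N.evalT v t) → N.Sat0 (Function.update v n a) φ

/-- Satisfaction for Δ₀ formulas of L_PA ∪ {T}. -/
def PAStruct.SatT0 (N : PAStruct) (T : N.M → Prop) : (ℕ → N.M) → TFml0 → Prop
  | v, .eq t u => N.evalT v t = N.evalT v u
  | v, .tr t => T (N.evalT v t)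
  | v, .not φ => ¬ N.SatT0 T v φ
  | v, .or φ ψ => N.SatT0 T v φ ∨ N.SatT0 T v ψ
  | v, .and φ ψ => N.SatT0 T v φ ∧ N.SatT0 T v ψ
  | v, .bex n t φ => ∃ a, N.le a (N.evalT v t) ∧ N.SatT0 T (Function.update v n a) φ
  | v, .ball n t φ => ∀ a, N.le a (N.evalT v t) → N.SatT0 T (Function.update v n a) φ

/-- Satisfaction for formulas of L_PA ∪ {T}. -/
def PAStruct.SatT (N : PAStruct) (T : N.M → Prop) : (ℕ → N.M) → TFml → Prop
  | v, .eq t u => N.evalT v t = N.evalT v u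
  | v, .tr t => T (N.evalT v t)
  | v, .not φ => ¬ N.SatT T v φ
  | v, .or φ ψ => N.SatT T v φ ∨ N.SatT T v ψ
  | v, .and φ ψ => N.SatT T v φ ∧ N.SatT T v ψ
  | v, .ex n φ => ∃ a, N.SatT T (Function.update v n a) φ
  | v, .all n φ => ∀ a, N.SatT T (Function.update v n a) φ

/-- Satisfaction for formulas of L_PA extended by predicates indexed by `P`,
    interpreted by `I`. -/
def PAStruct.SatX (N : PAStruct) {P : Type} (I : P → N.M → Prop) : (ℕ → N.M) → FmlX P → Prop
  | v, .eq t u => N.evalT v t = N.evalT v u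
  | v, .pat p t => I p (N.evalT v t)
  | v, .not φ => ¬ N.SatX I v φ
  | v, .or φ ψ => N.SatX I v φ ∨ N.SatX I v ψ
  | v, .and φ ψ => N.SatX I v φ ∧ N.SatX I v ψ
  | v, .ex n φ => ∃ a, N.SatX I (Function.update v n a) φ
  | v, .all n φ => ∀ a, N.SatX I (Function.update v n a) φ

/-- `N` is a model of PA: the basic axioms for S, +, × and the full first-order
    induction scheme (with parameters) for L_PA-formulas. -/
def PAStruct.ModelOfPA (N : PAStruct) : Prop :=
  (∀ x, N.succ x ≠ N.zero) ∧
  (∀ x y, N.succ x = N.succ y → x = y) ∧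
  (∀ x, N.add x N.zero = x) ∧
  (∀ x y, N.add x (N.succ y) = N.succ (N.add x y)) ∧
  (∀ x, N.mul x N.zero = N.zero) ∧
  (∀ x y, N.mul x (N.succ y) = N.add (N.mul x y) x) ∧
  (∀ (φ : Fml) (n : ℕ) (v : ℕ → N.M),
    N.Sat (Function.update v n N.zero) φ →
    (∀ a, N.Sat (Function.update v n a) φ → N.Sat (Function.update v n (N.succ a)) φ) →
    ∀ a, N.Sat (Function.update v n a) φ)

/-- The interpretation of the numeral of `n`. -/
def PAStruct.std (N : PAStruct) : ℕ → N.M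
  | 0 => N.zero
  | n + 1 => N.succ (N.std n)

/-- `a` is a nonstandard element. -/
def PAStruct.Nonstd (N : PAStruct) (a : N.M) : Prop := ∀ n : ℕ, a ≠ N.std n

/-- `N` satisfies the sentence `φ`. -/
def PAStruct.SatSent (N : PAStruct) (φ : Fml) : Prop := ∀ v : ℕ → N.M, N.Sat v φ

/-- IΔ₀(T): the scheme of induction (with parameters) for Δ₀ formulas of L_PA ∪ {T}. -/
def Delta0Ind (N : PAStruct) (T : N.M → Prop) : Prop :=
  ∀ (φ : TFml0) (n : ℕ) (v : ℕ → N.M),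
    N.SatT0 T (Function.update v n N.zero) φ →
    (∀ a, N.SatT0 T (Function.update v n a) φ → N.SatT0 T (Function.update v n (N.succ a)) φ) →
    ∀ a, N.SatT0 T (Function.update v n a) φ

/-- The full induction scheme (with parameters) in the language L_PA expanded by the
    family of unary predicates indexed by `P` and interpreted by `I`. -/
def FullIndX (N : PAStruct) {P : Type} (I : P → N.M → Prop) : Prop :=
  ∀ (φ : FmlX P) (n : ℕ) (v : ℕ → N.M),
    N.SatX I (Function.update v n N.zero) φ →
    (∀ a, N.SatX I (Function.update v n a) φ → N.SatX I (Function.update v n (N.succ a)) φ) →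
    ∀ a, N.SatX I (Function.update v n a) φ

/-- Δ₀-definability of a unary predicate on `N`. -/
def Definable1 (N : PAStruct) (P : N.M → Prop) : Prop :=
  ∃ φ : Fml0, ∀ x : N.M, P x ↔ N.Sat0 (fun _ => x) φ

/-- Δ₀-definability of a binary relation on `N` (variable 0 ↦ x, others ↦ y). -/
def Definable2 (N : PAStruct) (P : N.M → N.M → Prop) : Prop :=
  ∃ φ : Fml0, ∀ x y : N.M, P x y ↔ N.Sat0 (fun n => if n = 0 then x else y) φ

/-- Δ₀-definability of a ternary relation on `N`. -/
def Definable3 (N : PAStruct) (P : N.M → N.M → N.M → Prop) : Prop :=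
  ∃ φ : Fml0, ∀ x y z : N.M,
    P x y z ↔ N.Sat0 (fun n => if n = 0 then x else if n = 1 then y else z) φ

/-- The internal (Gödel-coded) syntax of the model `N`: predicates distinguishing codes
    of variables, terms, formulas, sentences and coded finite sequences thereof, the
    basic syntactic operations on codes, assignments, the Δ₀ arithmetical truth
    predicate `Tr0`, propositional derivability, together with their basic
    (PA-provable) properties, including Δ₀-definability of the coding apparatus. -/
structure Coding (N : PAStruct) where
  Var' : N.M → Prop
  Trm' : N.M → Prop
  ClTrm' : N.M → Prop
  Fml' : N.M → Prop
  Fml1' : N.M → Prop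
  Sent' : N.M → Prop
  qfSent' : N.M → Prop
  FinSeq' : N.M → Prop
  SentSeq' : N.M → Prop
  FmlSeq' : N.M → Prop
  ClTrmSeq' : N.M → Prop
  lh : N.M → N.M
  app : N.M → N.M → N.M
  snoc : N.M → N.M → N.M
  concat : N.M → N.M → N.M
  negSeq : N.M → N.M
  val : N.M → N.M
  valSeq : N.M → N.M
  num : N.M → N.M
  eq' : N.M → N.M → N.M
  not' : N.M → N.M
  or' : N.M → N.M → N.M
  and' : N.M → N.M → N.M
  ex' : N.M → N.M → N.M
  all' : N.M → N.M → N.M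
  bigOr : N.M → N.M
  subst : N.M → N.M → N.M → N.M
  substSeq : N.M → N.M → N.M
  subst1 : N.M → N.M → N.M
  Asn : N.M → N.M → Prop
  substA : N.M → N.M → N.M
  evalA : N.M → N.M → N.M
  asnUpd : N.M → N.M → N.M → N.M
  asnExt : N.M → N.M → N.M → Prop
  emptyAsn : N.M
  freeIn : N.M → N.M → Prop
  Tr0 : N.M → Prop
  PrPropFrom : Set N.M → N.M → Prop
  sent_fml : ∀ x, Sent' x → Fml' x
  fml1_fml : ∀ x, Fml1' x → Fml' x
  qf_sent : ∀ x, qfSent' x → Sent' x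
  clt_trm : ∀ x, ClTrm' x → Trm' x
  num_cl : ∀ x, ClTrm' (num x)
  val_num : ∀ x, val (num x) = x
  sentSeq_iff : ∀ s, SentSeq' s ↔ (FinSeq' s ∧ ∀ i, N.lt i (lh s) → Sent' (app s i))
  fmlSeq_iff : ∀ s, FmlSeq' s ↔ (FinSeq' s ∧ ∀ i, N.lt i (lh s) → Fml' (app s i))
  snoc_fin : ∀ s x, FinSeq' s → FinSeq' (snoc s x)
  snoc_lh : ∀ s x, FinSeq' s → lh (snoc s x) = N.succ (lh s)
  snoc_app : ∀ s x i, FinSeq' s → N.lt i (lh s) → app (snoc s x) i = app s i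
  snoc_last : ∀ s x, FinSeq' s → app (snoc s x) (lh s) = x
  concat_fin : ∀ s t, FinSeq' s → FinSeq' t → FinSeq' (concat s t)
  concat_lh : ∀ s t, FinSeq' s → FinSeq' t → lh (concat s t) = N.add (lh s) (lh t)
  concat_app_l : ∀ s t i, FinSeq' s → FinSeq' t → N.lt i (lh s) → app (concat s t) i = app s i
  concat_app_r : ∀ s t i, FinSeq' s → FinSeq' t → N.lt i (lh t) →
    app (concat s t) (N.add (lh s) i) = app t i
  negSeq_seq : ∀ s, SentSeq' s → SentSeq' (negSeq s)
  negSeq_lh : ∀ s, SentSeq' s → lh (negSeq s) = lh s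
  negSeq_app : ∀ s i, SentSeq' s → N.lt i (lh s) → app (negSeq s) i = not' (app s i)
  sent_not : ∀ φ, Sent' φ → Sent' (not' φ)
  sent_or : ∀ φ ψ, Sent' φ → Sent' ψ → Sent' (or' φ ψ)
  sent_and : ∀ φ ψ, Sent' φ → Sent' ψ → Sent' (and' φ ψ)
  sent_eq : ∀ s t, ClTrm' s → ClTrm' t → Sent' (eq' s t)
  bigOr_sent : ∀ s, SentSeq' s → Sent' (bigOr s)
  bigOr_one : ∀ s, SentSeq' s → lh s = N.succ N.zero → bigOr s = app s N.zero
  bigOr_snoc : ∀ s ψ, SentSeq' s → N.lt N.zero (lh s) → Sent' ψ →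
    bigOr (snoc s ψ) = or' (bigOr s) ψ
  substA_sent : ∀ φ α, Fml' φ → Asn φ α → Sent' (substA φ α)
  emptyAsn_asn : ∀ φ, Sent' φ → Asn φ emptyAsn
  asnUpd_asn : ∀ φ α x v, Asn φ α → Asn φ (asnUpd α x v)
  df_sent : Definable1 N Sent'
  df_fin : Definable1 N FinSeq'
  df_lh : Definable2 N (fun s y => lh s = y)
  df_app : Definable3 N (fun s i y => app s i = y)
  df_bigOr : Definable2 N (fun s y => bigOr s = y)
  df_not : Definable2 N (fun x y => not' x = y)
  df_or : Definable3 N (fun x y z => or' x y = z)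
  df_num : Definable2 N (fun x y => num x = y)
  df_negSeq : Definable2 N (fun s y => negSeq s = y)
  df_snoc : Definable3 N (fun s x y => snoc s x = y)

/-- CT⁻: the compositional axioms (including the regularity axiom) for the truth
    predicate `T` over the model `N` with internal syntax `C`. -/
structure CTminus (N : PAStruct) (C : Coding N) (T : N.M → Prop) : Prop where
  tSent : ∀ x, T x → C.Sent' x
  tEq : ∀ s t, C.ClTrm' s → C.ClTrm' t → (T (C.eq' s t) ↔ C.val s = C.val t)
  tNot : ∀ φ, C.Sent' φ → (T (C.not' φ) ↔ ¬ T φ)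
  tOr : ∀ φ ψ, C.Sent' φ → C.Sent' ψ → (T (C.or' φ ψ) ↔ (T φ ∨ T ψ))
  tAnd : ∀ φ ψ, C.Sent' φ → C.Sent' ψ → (T (C.and' φ ψ) ↔ (T φ ∧ T ψ))
  tEx : ∀ v φ, C.Var' v → C.Fml' φ → C.Sent' (C.ex' v φ) →
    (T (C.ex' v φ) ↔ ∃ x, T (C.subst φ v (C.num x)))
  tAll : ∀ v φ, C.Var' v → C.Fml' φ → C.Sent' (C.all' v φ) →
    (T (C.all' v φ) ↔ ∀ x, T (C.subst φ v (C.num x)))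
  tReg : ∀ φ s t, C.Fml' φ → C.ClTrmSeq' s → C.ClTrmSeq' t → C.valSeq s = C.valSeq t →
    (T (C.substSeq φ s) ↔ T (C.substSeq φ t))

/-- DC: a (possibly nonstandard) disjunction is true iff it has a true disjunct. -/
def DC (N : PAStruct) (C : Coding N) (T : N.M → Prop) : Prop :=
  ∀ s, C.SentSeq' s → (T (C.bigOr s) ↔ ∃ i, N.le i (C.lh s) ∧ T (C.app s i))

/-- DCout: a true disjunction has a true disjunct. -/
def DCout (N : PAStruct) (C : Coding N) (T : N.M → Prop) : Prop :=
  ∀ s, C.SentSeq' s → T (C.bigOr s) → ∃ i, N.le i (C.lh s) ∧ T (C.app s i)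

/-- DCin: a disjunction with a true disjunct is true. -/
def DCin (N : PAStruct) (C : Coding N) (T : N.M → Prop) : Prop :=
  ∀ s, C.SentSeq' s → (∃ i, N.le i (C.lh s) ∧ T (C.app s i)) → T (C.bigOr s)

/-- SeqInd: sequential induction for the predicate `T`. -/
def SeqInd (N : PAStruct) (C : Coding N) (T : N.M → Prop) : Prop :=
  ∀ s, C.FinSeq' s → T (C.app s N.zero) →
    (∀ i, N.lt (N.succ i) (C.lh s) → T (C.app s i) → T (C.app s (N.succ i))) →
    ∀ j, N.lt j (C.lh s) → T (C.app s j)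

/-- SeqOInd: sequential order induction for the predicate `T`. -/
def SeqOInd (N : PAStruct) (C : Coding N) (T : N.M → Prop) : Prop :=
  ∀ s, C.FinSeq' s →
    (∀ j, N.lt j (C.lh s) → (∀ i, N.lt i j → T (C.app s i)) → T (C.app s j)) →
    ∀ l, N.lt l (C.lh s) → T (C.app s l)

/-- INT: internal induction for the truth predicate. -/
def INT (N : PAStruct) (C : Coding N) (T : N.M → Prop) : Prop :=
  ∀ φ, C.Fml1' φ → T (C.subst1 φ N.zero) →
    (∀ x, T (C.subst1 φ x) → T (C.subst1 φ (N.succ x))) →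
    ∀ x, T (C.subst1 φ x)

/-- QFC: quantifier-free correctness. -/
def QFC (N : PAStruct) (C : Coding N) (T : N.M → Prop) : Prop :=
  ∀ φ, C.qfSent' φ → C.Tr0 φ → T φ

/-- PropSnd: every arithmetical sentence provable in pure propositional logic is true. -/
def PropSnd (N : PAStruct) (C : Coding N) (T : N.M → Prop) : Prop :=
  ∀ φ, C.Sent' φ → C.PrPropFrom ∅ φ → T φ

/-- PropRef: every arithmetical sentence derivable in propositional logic from true
    premises is true. -/
def PropRef (N : PAStruct) (C : Coding N) (T : N.M → Prop) : Prop :=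
  ∀ φ, C.Sent' φ → C.PrPropFrom {y | T y} φ → T φ

/-- CT₀ = CT⁻ + Δ₀-induction for the language with the truth predicate. -/
def CT0 (N : PAStruct) (C : Coding N) (T : N.M → Prop) : Prop :=
  CTminus N C T ∧ Delta0Ind N T

/-- A theory in the language of CT⁻, given semantically as a class of models. -/
def SemTheory := (N : PAStruct) → Coding N → (N.M → Prop) → Prop

/-- `(x, y)` is in the graph of the formula `D(x, y)` of L_PA ∪ {T} in `(N, T)`. -/
def Dgraph (N : PAStruct) (T : N.M → Prop) (D : TFml) (x y : N.M) : Prop :=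
  N.SatT T (fun n => if n = 0 then x else y) D

/-- The (provably functional) formula `D` is an outer disjunction in the model
    `(N, C, T)`. -/
def OuterDisjFml (N : PAStruct) (C : Coding N) (T : N.M → Prop) (D : TFml) : Prop :=
  (∀ x, ∃! y, Dgraph N T D x y) ∧
  (∀ s y, C.SentSeq' s → Dgraph N T D s y → C.Sent' y) ∧
  (∀ s ψ y y', C.SentSeq' s → C.Sent' ψ → Dgraph N T D (C.snoc s ψ) y → Dgraph N T D s y' →
    (T y ↔ (T y' ∨ T ψ))) ∧
  (∀ s y, C.SentSeq' s → Dgraph N T D s y → T y → ∃ i, N.le i (C.lh s) ∧ T (C.app s i))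

/-- The function `Df` on codes is an outer disjunction in `(N, C, T)`. -/
def OuterDisjFun (N : PAStruct) (C : Coding N) (T : N.M → Prop) (Df : N.M → N.M) : Prop :=
  (∀ s, C.SentSeq' s → C.Sent' (Df s)) ∧
  (∀ s ψ, C.SentSeq' s → C.Sent' ψ → (T (Df (C.snoc s ψ)) ↔ (T (Df s) ∨ T ψ))) ∧
  (∀ s, C.SentSeq' s → T (Df s) → ∃ i, N.le i (C.lh s) ∧ T (C.app s i))

/-- The theory `U` has outer disjunctions. -/
def HasOuterDisj (U : SemTheory) : Prop :=
  ∃ D : TFml, ∀ (N : PAStruct) (C : Coding N) (T : N.M → Prop),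
    U N C T → OuterDisjFml N C T D

/-- `ψ` is a direct subformula of `φ` (on codes). -/
def DirSub (N : PAStruct) (C : Coding N) (ψ φ : N.M) : Prop :=
  φ = C.not' ψ ∨
  (∃ η, φ = C.or' ψ η ∨ φ = C.or' η ψ ∨ φ = C.and' ψ η ∨ φ = C.and' η ψ) ∨
  (∃ v, φ = C.ex' v ψ ∨ φ = C.all' v ψ)

/-- Tarski's compositional clause `Comp(φ)` for the satisfaction relation `S`. -/
def CompClause (N : PAStruct) (C : Coding N) (S : N.M → N.M → Prop) (φ : N.M) : Prop :=
  (∃ s t, C.Trm' s ∧ C.Trm' t ∧ φ = C.eq' s t ∧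
    ∀ α, C.Asn φ α → (S φ α ↔ C.evalA s α = C.evalA t α)) ∨
  (∃ ψ, C.Fml' ψ ∧ φ = C.not' ψ ∧ ∀ α, C.Asn φ α → (S φ α ↔ ¬ S ψ α)) ∨
  (∃ ψ η, C.Fml' ψ ∧ C.Fml' η ∧ φ = C.or' ψ η ∧
    ∀ α, C.Asn φ α → (S φ α ↔ (S ψ α ∨ S η α))) ∨
  (∃ ψ η, C.Fml' ψ ∧ C.Fml' η ∧ φ = C.and' ψ η ∧
    ∀ α, C.Asn φ α → (S φ α ↔ (S ψ α ∧ S η α))) ∨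
  (∃ ψ v, C.Fml' ψ ∧ C.Var' v ∧ φ = C.ex' v ψ ∧
    ∀ α, C.Asn φ α → (S φ α ↔ ∃ β, C.asnExt β α v ∧ S ψ β)) ∨
  (∃ ψ v, C.Fml' ψ ∧ C.Var' v ∧ φ = C.all' v ψ ∧
    ∀ α, C.Asn φ α → (S φ α ↔ ∀ β, C.asnExt β α v → S ψ β))

/-- `S` is a satisfaction class with witnessing domain `D`. -/
def SatClassWith (N : PAStruct) (C : Coding N) (S : N.M → N.M → Prop) (D : Set N.M) : Prop :=
  (∀ φ ∈ D, C.Fml' φ) ∧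
  (∀ φ α, S φ α → C.Fml' φ ∧ C.Asn φ α) ∧
  (∀ φ α, S φ α → CompClause N C S φ) ∧
  (∀ φ α, S φ α → φ ∈ D ∨ ∃ ψ ∈ D, φ = C.not' ψ) ∧
  (∀ φ ∈ D, CompClause N C S φ) ∧
  (∀ φ ∈ D, ∀ ψ, C.Fml' ψ → DirSub N C ψ φ → ψ ∈ D) ∧
  (∀ φ ∈ D, ∀ α, C.Asn φ α → S φ α ∨ S (C.not' φ) α)

/-- `S` is a satisfaction class. -/
def IsSatClass (N : PAStruct) (C : Coding N) (S : N.M → N.M → Prop) : Prop :=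
  ∃ D, SatClassWith N C S D

/-- The domain of the satisfaction class `S` (the maximal witnessing set). -/
def satDom (N : PAStruct) (C : Coding N) (S : N.M → N.M → Prop) : Set N.M :=
  {φ | ∃ D, SatClassWith N C S D ∧ φ ∈ D}

/-- `S` is a full satisfaction class: its domain consists of all formulas. -/
def FullSatClass (N : PAStruct) (C : Coding N) (S : N.M → N.M → Prop) : Prop :=
  IsSatClass N C S ∧ ∀ φ, C.Fml' φ → φ ∈ satDom N C S

/-- Extensional equivalence of the pairs `(φ, α)` and `(ψ, β)`. -/
def ExtEquiv (N : PAStruct) (C : Coding N) (φ α ψ β : N.M) : Prop :=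
  ∃ η s t, C.Fml' η ∧ C.ClTrmSeq' s ∧ C.ClTrmSeq' t ∧ C.valSeq s = C.valSeq t ∧
    C.substA φ α = C.substSeq η s ∧ C.substA ψ β = C.substSeq η t

/-- `S` is invariant under extensional equivalence (regularity for satisfaction
    classes). -/
def RegularInv (N : PAStruct) (C : Coding N) (S : N.M → N.M → Prop) : Prop :=
  ∀ φ α ψ β, ExtEquiv N C φ α ψ β → (S φ α ↔ S ψ β)

/-- Internal induction holds for the satisfaction relation `S`. -/
def IntIndSat (N : PAStruct) (C : Coding N) (S : N.M → N.M → Prop) : Prop :=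
  ∀ φ, C.Fml1' φ → ∀ v, C.freeIn v φ → ∀ α, C.Asn φ α →
    S φ (C.asnUpd α N.zero v) →
    (∀ x, S φ (C.asnUpd α x v) → S φ (C.asnUpd α (N.succ x) v)) →
    ∀ x, S φ (C.asnUpd α x v)

/-- `j` is an elementary embedding of `N` into `N'`. -/
def ElemEmb (N N' : PAStruct) (j : N.M → N'.M) : Prop :=
  ∀ (φ : Fml) (v : ℕ → N.M), N.Sat v φ ↔ N'.Sat (fun n => j (v n)) φ

/-- The embedding `j` is compatible with the internal syntax of the two models
    (as is automatic for an elementary embedding and the definable coding). -/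
structure CodingEmb (N N' : PAStruct) (C : Coding N) (C' : Coding N') (j : N.M → N'.M) :
    Prop where
  fml : ∀ x, C.Fml' x ↔ C'.Fml' (j x)
  fml1 : ∀ x, C.Fml1' x ↔ C'.Fml1' (j x)
  sent : ∀ x, C.Sent' x ↔ C'.Sent' (j x)
  var : ∀ x, C.Var' x ↔ C'.Var' (j x)
  finSeq : ∀ x, C.FinSeq' x ↔ C'.FinSeq' (j x)
  fmlSeq : ∀ x, C.FmlSeq' x ↔ C'.FmlSeq' (j x)
  asn : ∀ x y, C.Asn x y ↔ C'.Asn (j x) (j y)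
  lh : ∀ x, j (C.lh x) = C'.lh (j x)
  app : ∀ x i, j (C.app x i) = C'.app (j x) (j i)
  not' : ∀ x, j (C.not' x) = C'.not' (j x)
  or' : ∀ x y, j (C.or' x y) = C'.or' (j x) (j y)
  and' : ∀ x y, j (C.and' x y) = C'.and' (j x) (j y)
  bigOr : ∀ x, j (C.bigOr x) = C'.bigOr (j x)
  substA : ∀ x y, j (C.substA x y) = C'.substA (j x) (j y)
  num : ∀ x, j (C.num x) = C'.num (j x)

/-- `bal` is the balanced disjunction operation on coded sequences of sentences. -/
def IsBalanced (N : PAStruct) (C : Coding N) (bal : N.M → N.M) : Prop :=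
  (∀ s, C.SentSeq' s → C.Sent' (bal s)) ∧
  (∀ s, C.SentSeq' s → C.lh s = N.zero →
    bal s = C.not' (C.eq' (C.num N.zero) (C.num N.zero))) ∧
  (∀ s, C.SentSeq' s → C.lh s = N.succ N.zero → bal s = C.app s N.zero) ∧
  (∀ s, C.SentSeq' s → N.le (N.succ (N.succ N.zero)) (C.lh s) →
    ∃ s₁ s₂ d, C.SentSeq' s₁ ∧ C.SentSeq' s₂ ∧ s = C.concat s₁ s₂ ∧ C.lh s₁ = d ∧
      (C.lh s = N.add d d ∨ C.lh s = N.succ (N.add d d)) ∧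
      bal s = C.or' (bal s₁) (bal s₂))

/-! ### Auxiliary infrastructure for the proof -/

namespace Aux

/-- All variables of a term. -/
def trmVars : Trm → Finset ℕ
  | .var n => {n}
  | .zero => ∅
  | .succ t => trmVars t
  | .add t u => trmVars t ∪ trmVars u
  | .mul t u => trmVars t ∪ trmVars u

/-- Rename all variables of a term. -/
def trmRen (ρ : ℕ → ℕ) : Trm → Trm
  | .var n => .var (ρ n)
  | .zero => .zero
  | .succ t => .succ (trmRen ρ t)
  | .add t u => .add (trmRen ρ t) (trmRen ρ u)
  | .mul t u => .mul (trmRen ρ t) (trmRen ρ u)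

/-- Free variables of a Δ₀ formula. -/
def fvs0 : Fml0 → Finset ℕ
  | .eq t u => trmVars t ∪ trmVars u
  | .not φ => fvs0 φ
  | .or φ ψ => fvs0 φ ∪ fvs0 ψ
  | .and φ ψ => fvs0 φ ∪ fvs0 ψ
  | .bex n t φ => trmVars t ∪ (fvs0 φ).erase n
  | .ball n t φ => trmVars t ∪ (fvs0 φ).erase n

/-- Rename all (free and bound) variables of a Δ₀ formula. -/
def ren0 (ρ : ℕ → ℕ) : Fml0 → Fml0
  | .eq t u => .eq (trmRen ρ t) (trmRen ρ u)
  | .not φ => .not (ren0 ρ φ)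
  | .or φ ψ => .or (ren0 ρ φ) (ren0 ρ ψ)
  | .and φ ψ => .and (ren0 ρ φ) (ren0 ρ ψ)
  | .bex n t φ => .bex (ρ n) (trmRen ρ t) (ren0 ρ φ)
  | .ball n t φ => .ball (ρ n) (trmRen ρ t) (ren0 ρ φ)

variable {N : PAStruct}

lemma evalT_congr : ∀ (t : Trm) {v v' : ℕ → N.M}, (∀ n ∈ trmVars t, v n = v' n) →
    N.evalT v t = N.evalT v' t
  | .var n, v, v', h => h n (by simp [trmVars])
  | .zero, _, _, _ => rfl
  | .succ t, v, v', h => by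
      simp only [PAStruct.evalT]; rw [evalT_congr t h]
  | .add t u, v, v', h => by
      simp only [PAStruct.evalT]
      rw [evalT_congr t (fun n hn => h n (by simp [trmVars, hn])),
        evalT_congr u (fun n hn => h n (by simp [trmVars, hn]))]
  | .mul t u, v, v', h => by
      simp only [PAStruct.evalT]
      rw [evalT_congr t (fun n hn => h n (by simp [trmVars, hn])),
        evalT_congr u (fun n hn => h n (by simp [trmVars, hn]))]

lemma evalT_ren (ρ : ℕ → ℕ) : ∀ (t : Trm) (v : ℕ → N.M),
    N.evalT v (trmRen ρ t) = N.evalT (v ∘ ρ) t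
  | .var n, v => rfl
  | .zero, _ => rfl
  | .succ t, v => by simp only [trmRen, PAStruct.evalT, evalT_ren ρ t]
  | .add t u, v => by simp only [trmRen, PAStruct.evalT, evalT_ren ρ t, evalT_ren ρ u]
  | .mul t u, v => by simp only [trmRen, PAStruct.evalT, evalT_ren ρ t, evalT_ren ρ u]

lemma sat0_congr : ∀ (φ : Fml0) {v v' : ℕ → N.M}, (∀ n ∈ fvs0 φ, v n = v' n) →
    (N.Sat0 v φ ↔ N.Sat0 v' φ)
  | .eq t u, v, v', h => by
      simp only [PAStruct.Sat0]
      rw [evalT_congr t (fun n hn => h n (by simp [fvs0, hn])),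
        evalT_congr u (fun n hn => h n (by simp [fvs0, hn]))]
  | .not φ, v, v', h => by
      simp only [PAStruct.Sat0]; rw [sat0_congr φ h]
  | .or φ ψ, v, v', h => by
      simp only [PAStruct.Sat0]
      rw [sat0_congr φ (fun n hn => h n (by simp [fvs0, hn])),
        sat0_congr ψ (fun n hn => h n (by simp [fvs0, hn]))]
  | .and φ ψ, v, v', h => by
      simp only [PAStruct.Sat0]
      rw [sat0_congr φ (fun n hn => h n (by simp [fvs0, hn])),
        sat0_congr ψ (fun n hn => h n (by simp [fvs0, hn]))]
  | .bex n t φ, v, v', h => by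
      simp only [PAStruct.Sat0]
      rw [evalT_congr t (fun m hm => h m (by simp [fvs0, hm]))]
      refine exists_congr fun a => and_congr_right fun _ => ?_
      refine sat0_congr φ fun m hm => ?_
      rcases eq_or_ne m n with rfl | hmn
      · simp
      · simp only [Function.update_of_ne hmn]
        exact h m (by simp [fvs0, Finset.mem_erase, hm, hmn])
  | .ball n t φ, v, v', h => by
      simp only [PAStruct.Sat0]
      rw [evalT_congr t (fun m hm => h m (by simp [fvs0, hm]))]
      refine forall_congr' fun a => imp_congr_right fun _ => ?_
      refine sat0_congr φ fun m hm => ?_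
      rcases eq_or_ne m n with rfl | hmn
      · simp
      · simp only [Function.update_of_ne hmn]
        exact h m (by simp [fvs0, Finset.mem_erase, hm, hmn])

lemma sat0_ren (ρ : ℕ → ℕ) (hρ : Function.Injective ρ) : ∀ (φ : Fml0) (v : ℕ → N.M),
    N.Sat0 v (ren0 ρ φ) ↔ N.Sat0 (v ∘ ρ) φ
  | .eq t u, v => by simp only [ren0, PAStruct.Sat0, evalT_ren]
  | .not φ, v => by simp only [ren0, PAStruct.Sat0, sat0_ren ρ hρ φ v]
  | .or φ ψ, v => by simp only [ren0, PAStruct.Sat0, sat0_ren ρ hρ φ v, sat0_ren ρ hρ ψ v]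
  | .and φ ψ, v => by simp only [ren0, PAStruct.Sat0, sat0_ren ρ hρ φ v, sat0_ren ρ hρ ψ v]
  | .bex n t φ, v => by
      simp only [ren0, PAStruct.Sat0, evalT_ren]
      refine exists_congr fun a => and_congr_right fun _ => ?_
      rw [sat0_ren ρ hρ φ]
      have : (Function.update v (ρ n) a) ∘ ρ = Function.update (v ∘ ρ) n a := by
        funext m
        rcases eq_or_ne m n with rfl | hmn
        · simp
        · simp [Function.comp, Function.update_of_ne hmn,
            Function.update_of_ne (fun h => hmn (hρ h))]
      rw [this]
  | .ball n t φ, v => by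
      simp only [ren0, PAStruct.Sat0, evalT_ren]
      refine forall_congr' fun a => imp_congr_right fun _ => ?_
      rw [sat0_ren ρ hρ φ]
      have : (Function.update v (ρ n) a) ∘ ρ = Function.update (v ∘ ρ) n a := by
        funext m
        rcases eq_or_ne m n with rfl | hmn
        · simp
        · simp [Function.comp, Function.update_of_ne hmn,
            Function.update_of_ne (fun h => hmn (hρ h))]
      rw [this]

end Aux

namespace Aux

variable {N : PAStruct}

/-- Embed Δ₀ arithmetical formulas into Δ₀ formulas of the language with T. -/
def toT : Fml0 → TFml0
  | .eq t u => .eq t u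
  | .not φ => .not (toT φ)
  | .or φ ψ => .or (toT φ) (toT ψ)
  | .and φ ψ => .and (toT φ) (toT ψ)
  | .bex n t φ => .bex n t (toT φ)
  | .ball n t φ => .ball n t (toT φ)

lemma satT0_toT (T : N.M → Prop) : ∀ (φ : Fml0) (v : ℕ → N.M),
    N.SatT0 T v (toT φ) ↔ N.Sat0 v φ
  | .eq t u, v => Iff.rfl
  | .not φ, v => by simp only [toT, PAStruct.SatT0, PAStruct.Sat0, satT0_toT T φ]
  | .or φ ψ, v => by
      simp only [toT, PAStruct.SatT0, PAStruct.Sat0, satT0_toT T φ, satT0_toT T ψ]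
  | .and φ ψ, v => by
      simp only [toT, PAStruct.SatT0, PAStruct.Sat0, satT0_toT T φ, satT0_toT T ψ]
  | .bex n t φ, v => by
      simp only [toT, PAStruct.SatT0, PAStruct.Sat0]
      exact exists_congr fun a => and_congr_right fun _ => satT0_toT T φ _
  | .ball n t φ, v => by
      simp only [toT, PAStruct.SatT0, PAStruct.Sat0]
      exact forall_congr' fun a => imp_congr_right fun _ => satT0_toT T φ _

/-- A variable fresh for `n`, `t`, `φ`. -/
def fresh (n : ℕ) (t : Trm) (φ : Fml0) : ℕ := ((trmVars t ∪ fvs0 φ ∪ {n}).sup id) + 1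

lemma fresh_t {n t φ} : ∀ k ∈ trmVars t, k < fresh n t φ := fun k hk =>
  Nat.lt_succ_of_le (Finset.le_sup (f := id) (by simp [hk]))

lemma fresh_φ {n t φ} : ∀ k ∈ fvs0 φ, k < fresh n t φ := fun k hk =>
  Nat.lt_succ_of_le (Finset.le_sup (f := id) (by simp [hk]))

lemma fresh_n {n t φ} : n < fresh n t φ :=
  Nat.lt_succ_of_le (Finset.le_sup (f := id) (by simp))

/-- Embed Δ₀ arithmetical formulas into full first-order formulas, unfolding
bounded quantifiers using fresh variables. -/
def toF : Fml0 → Fml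
  | .eq t u => .eq t u
  | .not φ => .not (toF φ)
  | .or φ ψ => .or (toF φ) (toF ψ)
  | .and φ ψ => .and (toF φ) (toF ψ)
  | .bex n t φ =>
      .ex (fresh n t φ) (.and
        (.ex (fresh n t φ + 1) (.eq (.add (.var (fresh n t φ)) (.var (fresh n t φ + 1))) t))
        (.ex n (.and (.eq (.var n) (.var (fresh n t φ))) (toF φ))))
  | .ball n t φ =>
      .all (fresh n t φ) (.or
        (.not (.ex (fresh n t φ + 1) (.eq (.add (.var (fresh n t φ)) (.var (fresh n t φ + 1))) t)))
        (.all n (.or (.not (.eq (.var n) (.var (fresh n t φ)))) (toF φ))))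

lemma sat_toF : ∀ (φ : Fml0) (v : ℕ → N.M), N.Sat v (toF φ) ↔ N.Sat0 v φ
  | .eq t u, v => Iff.rfl
  | .not φ, v => by simp only [toF, PAStruct.Sat, PAStruct.Sat0, sat_toF φ v]
  | .or φ ψ, v => by simp only [toF, PAStruct.Sat, PAStruct.Sat0, sat_toF φ v, sat_toF ψ v]
  | .and φ ψ, v => by simp only [toF, PAStruct.Sat, PAStruct.Sat0, sat_toF φ v, sat_toF ψ v]
  | .bex n t φ, v => by
      have hmt := fresh_t (n := n) (t := t) (φ := φ)
      have hmφ := fresh_φ (n := n) (t := t) (φ := φ)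
      have hmn := fresh_n (n := n) (t := t) (φ := φ)
      simp only [toF, PAStruct.Sat, PAStruct.Sat0, PAStruct.evalT]
      set m := fresh n t φ with hm
      have Et : ∀ b c : N.M,
          N.evalT (Function.update (Function.update v m b) (m+1) c) t = N.evalT v t :=
        fun b c => evalT_congr t fun k hk => by
          have := hmt k hk
          simp [Function.update_of_ne (by omega : k ≠ m+1),
            Function.update_of_ne (by omega : k ≠ m)]
      have Eφ : ∀ (b a : N.M) (ψ : Fml0), (∀ k ∈ fvs0 ψ, k < m) →
          (N.Sat0 (Function.update (Function.update v m b) n a) ψ ↔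
            N.Sat0 (Function.update v n a) ψ) :=
        fun b a ψ hψ => sat0_congr ψ fun k hk => by
          rcases eq_or_ne k n with rfl | hkn
          · simp
          · have := hψ k hk
            simp [Function.update_of_ne hkn, Function.update_of_ne (by omega : k ≠ m)]
      constructor
      · rintro ⟨b, ⟨c, hc⟩, a, ha, hφ⟩
        simp only [Function.update_self,
          Function.update_of_ne (by omega : m ≠ m+1), Function.update_self, Et] at hc
        simp only [Function.update_self,
          Function.update_of_ne (by omega : m ≠ n), Function.update_self] at ha
        subst ha
        rw [sat_toF φ, Eφ a a φ hmφ] at hφ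
        exact ⟨a, ⟨c, hc⟩, hφ⟩
      · rintro ⟨a, ⟨c, hc⟩, hφ⟩
        refine ⟨a, ⟨c, ?_⟩, a, ?_, ?_⟩
        · simp only [Function.update_self,
            Function.update_of_ne (by omega : m ≠ m+1), Function.update_self, Et]
          exact hc
        · simp [Function.update_of_ne (by omega : m ≠ n)]
        · rw [sat_toF φ, Eφ a a φ hmφ]
          exact hφ
  | .ball n t φ, v => by
      have hmt := fresh_t (n := n) (t := t) (φ := φ)
      have hmφ := fresh_φ (n := n) (t := t) (φ := φ)
      have hmn := fresh_n (n := n) (t := t) (φ := φ)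
      simp only [toF, PAStruct.Sat, PAStruct.Sat0, PAStruct.evalT]
      set m := fresh n t φ with hm
      have Et : ∀ b c : N.M,
          N.evalT (Function.update (Function.update v m b) (m+1) c) t = N.evalT v t :=
        fun b c => evalT_congr t fun k hk => by
          have := hmt k hk
          simp [Function.update_of_ne (by omega : k ≠ m+1),
            Function.update_of_ne (by omega : k ≠ m)]
      have Eφ : ∀ (b a : N.M) (ψ : Fml0), (∀ k ∈ fvs0 ψ, k < m) →
          (N.Sat0 (Function.update (Function.update v m b) n a) ψ ↔
            N.Sat0 (Function.update v n a) ψ) :=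
        fun b a ψ hψ => sat0_congr ψ fun k hk => by
          rcases eq_or_ne k n with rfl | hkn
          · simp
          · have := hψ k hk
            simp [Function.update_of_ne hkn, Function.update_of_ne (by omega : k ≠ m)]
      constructor
      · intro h b hb
        have h1 := h b
        rw [or_iff_not_imp_left, not_not] at h1
        rcases hb with ⟨c, hc⟩
        have h2 := h1 ⟨c, by
          simp only [Function.update_self,
            Function.update_of_ne (by omega : m ≠ m+1), Function.update_self, Et]
          exact hc⟩ b
        rw [or_iff_not_imp_left, not_not] at h2
        have h3 := h2 (by simp [Function.update_of_ne (by omega : m ≠ n)])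
        rw [sat_toF φ, Eφ b b φ hmφ] at h3
        exact h3
      · intro h b
        rw [or_iff_not_imp_left, not_not]
        rintro ⟨c, hc⟩ a
        rw [or_iff_not_imp_left, not_not]
        intro ha
        simp only [Function.update_self,
          Function.update_of_ne (by omega : m ≠ n), Function.update_self] at ha
        subst ha
        simp only [Function.update_self,
          Function.update_of_ne (by omega : m ≠ m+1), Function.update_self, Et] at hc
        rw [sat_toF φ, Eφ a a φ hmφ]
        exact h a ⟨c, hc⟩

end Aux

namespace Aux

variable {N : PAStruct}

lemma ax_zero_add (h : N.ModelOfPA) (x : N.M) : N.add N.zero x = x := by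
  obtain ⟨h1, h2, h3, h4, h5, h6, h7⟩ := h
  have := h7 (.eq (.add .zero (.var 0)) (.var 0)) 0 (fun _ => x) ?_ ?_
  · simpa [PAStruct.Sat, PAStruct.evalT] using this x
  · simp [PAStruct.Sat, PAStruct.evalT, h3]
  · intro a ha
    simp only [PAStruct.Sat, PAStruct.evalT, Function.update_self] at *
    rw [h4, ha]

lemma ax_succ_add (h : N.ModelOfPA) (x y : N.M) :
    N.add (N.succ x) y = N.succ (N.add x y) := by
  obtain ⟨h1, h2, h3, h4, h5, h6, h7⟩ := h
  have := h7 (.eq (.add (.succ (.var 1)) (.var 0)) (.succ (.add (.var 1) (.var 0)))) 0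
    (fun _ => x) ?_ ?_
  · simpa [PAStruct.Sat, PAStruct.evalT, Function.update_apply] using this y
  · simp [PAStruct.Sat, PAStruct.evalT, Function.update_apply, h3]
  · intro a ha
    simp only [PAStruct.Sat, PAStruct.evalT, Function.update_apply] at *
    norm_num at *
    rw [h4, h4, ha]

lemma ax_add_comm (h : N.ModelOfPA) (x y : N.M) : N.add x y = N.add y x := by
  obtain ⟨h1, h2, h3, h4, h5, h6, h7⟩ := h.imp id id
  have := h7 (.eq (.add (.var 1) (.var 0)) (.add (.var 0) (.var 1))) 0 (fun _ => x) ?_ ?_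
  · simpa [PAStruct.Sat, PAStruct.evalT, Function.update_apply] using this y
  · simp only [PAStruct.Sat, PAStruct.evalT, Function.update_apply]
    norm_num
    rw [h3, ax_zero_add h]
  · intro a ha
    simp only [PAStruct.Sat, PAStruct.evalT, Function.update_apply] at *
    norm_num at *
    rw [h4, ha, ax_succ_add h]

lemma ax_add_assoc (h : N.ModelOfPA) (x y z : N.M) :
    N.add (N.add x y) z = N.add x (N.add y z) := by
  obtain ⟨h1, h2, h3, h4, h5, h6, h7⟩ := h
  have := h7 (.eq (.add (.add (.var 1) (.var 2)) (.var 0))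
      (.add (.var 1) (.add (.var 2) (.var 0)))) 0
    (fun n => if n = 1 then x else y) ?_ ?_
  · simpa [PAStruct.Sat, PAStruct.evalT, Function.update_apply] using this z
  · simp [PAStruct.Sat, PAStruct.evalT, Function.update_apply, h3]
  · intro a ha
    simp only [PAStruct.Sat, PAStruct.evalT, Function.update_apply] at *
    norm_num at *
    rw [h4, h4, h4, ha]

lemma ax_zero_or_succ (h : N.ModelOfPA) (x : N.M) :
    x = N.zero ∨ ∃ y, x = N.succ y := by
  obtain ⟨h1, h2, h3, h4, h5, h6, h7⟩ := h
  have := h7 (.or (.eq (.var 0) .zero) (.ex 1 (.eq (.var 0) (.succ (.var 1))))) 0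
    (fun _ => x) ?_ ?_
  · simpa [PAStruct.Sat, PAStruct.evalT, Function.update_apply] using this x
  · simp [PAStruct.Sat, PAStruct.evalT, Function.update_apply]
  · intro a _
    simp only [PAStruct.Sat, PAStruct.evalT, Function.update_apply]
    norm_num

lemma mle_refl (h : N.ModelOfPA) (a : N.M) : N.le a a := ⟨N.zero, h.2.2.1 a⟩

lemma mle_succ_self (h : N.ModelOfPA) (a : N.M) : N.le a (N.succ a) :=
  ⟨N.succ N.zero, by rw [h.2.2.2.1, h.2.2.1]⟩

lemma mle_trans (h : N.ModelOfPA) {a b c : N.M} (hab : N.le a b) (hbc : N.le b c) :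
    N.le a c := by
  obtain ⟨d1, hd1⟩ := hab
  obtain ⟨d2, hd2⟩ := hbc
  exact ⟨N.add d1 d2, by rw [← ax_add_assoc h, hd1, hd2]⟩

lemma mle_zero (h : N.ModelOfPA) {a : N.M} (ha : N.le a N.zero) : a = N.zero := by
  obtain ⟨c, hc⟩ := ha
  rcases ax_zero_or_succ h c with rfl | ⟨c', rfl⟩
  · rw [h.2.2.1] at hc
    exact hc
  · rw [h.2.2.2.1] at hc
    exact absurd hc (h.1 _)

lemma not_mlt_zero (h : N.ModelOfPA) (a : N.M) : ¬ N.lt a N.zero := fun hl =>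
  h.1 a (mle_zero h hl)

lemma msucc_le_succ (h : N.ModelOfPA) {a b : N.M} :
    N.le (N.succ a) (N.succ b) ↔ N.le a b := by
  constructor
  · rintro ⟨c, hc⟩
    rw [ax_succ_add h] at hc
    exact ⟨c, h.2.1 _ _ hc⟩
  · rintro ⟨c, hc⟩
    exact ⟨c, by rw [ax_succ_add h, hc]⟩

lemma mlt_succ_iff (h : N.ModelOfPA) {a b : N.M} : N.lt a (N.succ b) ↔ N.le a b :=
  msucc_le_succ h

lemma mle_succ_cases (h : N.ModelOfPA) {i a : N.M} (hi : N.le i (N.succ a)) :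
    N.le i a ∨ i = N.succ a := by
  obtain ⟨c, hc⟩ := hi
  rcases ax_zero_or_succ h c with rfl | ⟨c', rfl⟩
  · right
    rw [h.2.2.1] at hc
    exact hc
  · left
    rw [h.2.2.2.1] at hc
    exact ⟨c', h.2.1 _ _ hc⟩

lemma mle_cases (h : N.ModelOfPA) {i a : N.M} (hi : N.le i a) : N.lt i a ∨ i = a := by
  obtain ⟨c, hc⟩ := hi
  rcases ax_zero_or_succ h c with rfl | ⟨c', rfl⟩
  · right
    rw [h.2.2.1] at hc
    exact hc
  · left
    rw [h.2.2.2.1] at hc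
    exact ⟨c', by rw [ax_succ_add h, hc]⟩

lemma mle_of_lt (h : N.ModelOfPA) {i a : N.M} (hi : N.lt i a) : N.le i a :=
  mle_trans h (mle_succ_self h i) hi

lemma mlt_of_lt_of_le (h : N.ModelOfPA) {a b c : N.M} (hab : N.lt a b) (hbc : N.le b c) :
    N.lt a c := mle_trans h hab hbc

lemma mle_add_right (h : N.ModelOfPA) (a b : N.M) : N.le a (N.add a b) := ⟨b, rfl⟩

lemma mle_add_left (h : N.ModelOfPA) (a b : N.M) : N.le b (N.add a b) :=
  ⟨a, ax_add_comm h b a⟩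

lemma mlt_of_lt_succ_of_lt (h : N.ModelOfPA) {i a L : N.M}
    (h1 : N.lt i (N.succ a)) (h2 : N.lt (N.succ a) L) : N.lt i L :=
  mle_trans h h1 (mle_trans h (mle_succ_self h _) h2)

end Aux

namespace Aux

variable {N : PAStruct}

/-- From a Δ₀ definition of a ternary relation, produce a Δ₀ formula whose
satisfaction depends only on the values of three chosen distinct variables. -/
lemma slot3 (h : N.ModelOfPA) {P : N.M → N.M → N.M → Prop} (hdef : Definable3 N P)
    (a b c : ℕ) (hab : a ≠ b) (hac : a ≠ c) (hbc : b ≠ c) :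
    ∃ Φ : Fml0, ∀ w : ℕ → N.M, N.Sat0 w Φ ↔ P (w a) (w b) (w c) := by
  classical
  obtain ⟨φ, hφ⟩ := hdef
  set K := max a (max b c) + 1 with hK
  have haK : a < K := by omega
  have hbK : b < K := by omega
  have hcK : c < K := by omega
  set ρ : ℕ → ℕ := fun n => if n = 0 then a else if n = 1 then b else n + K with hρ
  have hρinj : Function.Injective ρ := by
    intro m n hmn
    simp only [hρ] at hmn
    split_ifs at hmn <;> omega
  set l := ((fvs0 φ).filter (fun n => 2 ≤ n)).toList with hl
  have hlmem : ∀ n, n ∈ l ↔ n ∈ fvs0 φ ∧ 2 ≤ n := by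
    intro n
    simp [hl, Finset.mem_filter]
  set f : ℕ → Fml0 → Fml0 := fun n acc => Fml0.bex (n + K) (Trm.var c)
    (Fml0.and (Fml0.eq (Trm.var (n + K)) (Trm.var c)) acc) with hf
  have main : ∀ (l' : List ℕ) (w : ℕ → N.M),
      N.Sat0 w (l'.foldr f (ren0 ρ φ)) ↔
      N.Sat0 (fun m => if m ∈ l'.map (· + K) then w c else w m) (ren0 ρ φ) := by
    intro l'
    induction l' with
    | nil =>
        intro w
        have : (fun m => if m ∈ ([] : List ℕ).map (· + K) then w c else w m) = w := by
          funext m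
          simp
        rw [List.foldr_nil, this]
    | cons n tl ih =>
        intro w
        simp only [List.foldr_cons, hf, PAStruct.Sat0, PAStruct.evalT]
        constructor
        · rintro ⟨x, hx, hxc, hsat⟩
          have hcne : c ≠ n + K := by omega
          rw [Function.update_self, Function.update_of_ne hcne] at hxc
          subst hxc
          rw [ih] at hsat
          have : (fun m => if m ∈ tl.map (· + K) then
                (Function.update w (n + K) (w c)) c else (Function.update w (n + K) (w c)) m) =
              (fun m => if m ∈ (n :: tl).map (· + K) then w c else w m) := by
            funext m
            by_cases h1 : m ∈ tl.map (· + K)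
            · simp [h1, Function.update_of_ne hcne]
            · by_cases h2 : m = n + K
              · subst h2
                simp [h1, Function.update_self]
              · simp [h1, h2, Function.update_of_ne h2, Function.update_of_ne hcne]
          rw [this] at hsat
          exact hsat
        · intro hsat
          have hcne : c ≠ n + K := by omega
          refine ⟨w c, mle_refl h _, ?_, ?_⟩
          · rw [Function.update_self, Function.update_of_ne hcne]
          · rw [ih]
            have : (fun m => if m ∈ tl.map (· + K) then
                  (Function.update w (n + K) (w c)) c else (Function.update w (n + K) (w c)) m) =
                (fun m => if m ∈ (n :: tl).map (· + K) then w c else w m) := by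
              funext m
              by_cases h1 : m ∈ tl.map (· + K)
              · simp [h1, Function.update_of_ne hcne]
              · by_cases h2 : m = n + K
                · subst h2
                  simp [h1, Function.update_self]
                · simp [h1, h2, Function.update_of_ne h2, Function.update_of_ne hcne]
            rw [this]
            exact hsat
  refine ⟨l.foldr f (ren0 ρ φ), fun w => ?_⟩
  rw [main l w, sat0_ren ρ hρinj]
  have hnot : ∀ x, x < K → x ∉ l.map (· + K) := by
    intro x hx hmem
    obtain ⟨m, _, hm2⟩ := List.mem_map.mp hmem
    omega
  rw [sat0_congr φ (v' := fun n => if n = 0 then w a else if n = 1 then w b else w c)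
    (fun n hn => ?_)]
  · exact (hφ (w a) (w b) (w c)).symm
  · simp only [Function.comp_apply, Function.comp]
    rcases Nat.lt_or_ge n 2 with hn2 | hn2
    · interval_cases n
      · rw [show ρ 0 = a from by simp [hρ]]
        simp [hnot a haK]
      · rw [show ρ 1 = b from by simp [hρ]]
        simp [hnot b hbK]
    · rw [show ρ n = n + K from by
        simp only [hρ]
        rw [if_neg (by omega), if_neg (by omega)]]
      have hmem : n + K ∈ l.map (· + K) :=
        List.mem_map.mpr ⟨n, (hlmem n).mpr ⟨hn, hn2⟩, rfl⟩
      simp only [hmem, if_true]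
      rw [if_neg (by omega), if_neg (by omega)]

end Aux

namespace Aux

variable {N : PAStruct}

/-- The Δ₀ formula (with T) expressing `w i < w k`, with auxiliary variable `j`. -/
def LtT (i k j : ℕ) : TFml0 :=
  .bex j (.var k) (.eq (.add (.succ (.var i)) (.var j)) (.var k))

lemma satT0_LtT (h : N.ModelOfPA) (T : N.M → Prop) (i k j : ℕ) (hij : i ≠ j) (hkj : k ≠ j)
    (w : ℕ → N.M) : N.SatT0 T w (LtT i k j) ↔ N.lt (w i) (w k) := by
  simp only [LtT, PAStruct.SatT0, PAStruct.evalT, Function.update_self,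
    Function.update_of_ne hij, Function.update_of_ne hkj]
  constructor
  · rintro ⟨cc, _, hcc⟩
    exact ⟨cc, hcc⟩
  · rintro ⟨cc, hcc⟩
    exact ⟨cc, ⟨N.succ (w i), by rw [ax_add_comm h]; exact hcc⟩, hcc⟩

end Aux


/-- Theorem (Statement 10): Over PA, with `T` an arbitrary fresh unary predicate,
IΔ₀(T) implies SeqOInd, and SeqOInd implies SeqInd. -/
theorem idelta0_implies_seqOInd_implies_seqInd :
    ∀ (N : PAStruct) (C : Coding N) (T : N.M → Prop), N.ModelOfPA →
      ((Delta0Ind N T → SeqOInd N C T) ∧ (SeqOInd N C T → SeqInd N C T)) := by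
  intro N C T hPA
  constructor
  · intro hInd s _ H
    obtain ⟨Φ, hΦ⟩ := Aux.slot3 hPA C.df_app 0 3 4 (by omega) (by omega) (by omega)
    set L := C.lh s with hL
    -- Step 1: boundedness of the values of s below L
    have bdd : ∃ Pb : N.M, ∀ i, N.lt i L → N.le (C.app s i) Pb := by
      set χ : Fml := .ex 2 (.all 3 (.or
        (.not (.ex 5 (.eq (.add (.succ (.var 3)) (.var 5)) (.var 1))))
        (.ex 4 (.and (Aux.toF Φ) (.ex 5 (.eq (.add (.var 4) (.var 5)) (.var 2))))))) with hχ
      have decode : ∀ (k : N.M) (v : ℕ → N.M), v 0 = s →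
          (N.Sat (Function.update v 1 k) χ ↔
            ∃ Pb, ∀ i, N.lt i k → N.le (C.app s i) Pb) := by
        intro k v hv
        simp only [hχ, PAStruct.Sat, PAStruct.evalT, Aux.sat_toF, hΦ,
          Function.update_apply, hv]
        norm_num
        constructor
        · rintro ⟨Pb', hPb'⟩
          refine ⟨Pb', fun i hi => ?_⟩
          rcases hPb' i with hno | hle
          · obtain ⟨cc, hcc⟩ := hi
            exact absurd hcc (hno cc)
          · exact hle
        · rintro ⟨Pb', hPb'⟩
          refine ⟨Pb', fun i => ?_⟩
          by_cases hi : N.lt i k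
          · exact Or.inr (hPb' i hi)
          · exact Or.inl fun cc hcc => hi ⟨cc, hcc⟩
      have base : N.Sat (Function.update (fun _ => s) 1 N.zero) χ :=
        (decode _ _ rfl).mpr ⟨s, fun i hi => absurd hi (Aux.not_mlt_zero hPA i)⟩
      have step : ∀ a, N.Sat (Function.update (fun _ => s) 1 a) χ →
          N.Sat (Function.update (fun _ => s) 1 (N.succ a)) χ := by
        intro a ha
        rw [decode a _ rfl] at ha
        obtain ⟨Pb, hPb⟩ := ha
        refine (decode _ _ rfl).mpr ⟨N.add Pb (C.app s a), fun i hi => ?_⟩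
        rcases Aux.mle_cases hPA ((Aux.mlt_succ_iff hPA).mp hi) with hia | rfl
        · exact Aux.mle_trans hPA (hPb i hia) (Aux.mle_add_right hPA _ _)
        · exact Aux.mle_add_left hPA _ _
      exact (decode L _ rfl).mp (hPA.2.2.2.2.2.2 χ 1 (fun _ => s) base step L)
    obtain ⟨Pb, hPb⟩ := bdd
    -- Step 2: Δ₀(T) induction
    set ψ : TFml0 := .ball 3 (.var 2) (.or (.not (Aux.LtT 3 1 6))
      (.bex 4 (.var 5) (.and (Aux.toT Φ) (.tr (.var 4))))) with hψ
    set v : ℕ → N.M := fun n => if n = 0 then s else if n = 1 then L else Pb with hvdef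
    have decodeψ : ∀ (x : N.M),
        (N.SatT0 T (Function.update v 2 x) ψ ↔
          ∀ i, N.le i x → N.lt i L → T (C.app s i)) := by
      intro x
      have raw : N.SatT0 T (Function.update v 2 x) ψ ↔
          ∀ i, N.le i x → (¬ N.lt i L ∨ ∃ y, N.le y Pb ∧ (C.app s i = y ∧ T y)) := by
        simp only [hψ, PAStruct.SatT0, PAStruct.evalT, Aux.satT0_toT,
          Aux.satT0_LtT hPA T 3 1 6 (by omega) (by omega), hΦ,
          Function.update_apply, hvdef]
        norm_num
      rw [raw]
      constructor
      · intro hr i hix hiL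
        rcases hr i hix with hno | ⟨y, _, hy, hT⟩
        · exact absurd hiL hno
        · rwa [hy]
      · intro hc i hix
        by_cases hiL : N.lt i L
        · exact Or.inr ⟨C.app s i, hPb i hiL, rfl, hc i hix hiL⟩
        · exact Or.inl hiL
    have base : N.SatT0 T (Function.update v 2 N.zero) ψ :=
      (decodeψ _).mpr fun i hi hiL => by
        rw [Aux.mle_zero hPA hi] at hiL ⊢
        exact H N.zero hiL (fun i' hi' => absurd hi' (Aux.not_mlt_zero hPA i'))
    have step : ∀ a, N.SatT0 T (Function.update v 2 a) ψ →
        N.SatT0 T (Function.update v 2 (N.succ a)) ψ := by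
      intro a ha
      rw [decodeψ a] at ha
      refine (decodeψ _).mpr fun i hi hiL => ?_
      rcases Aux.mle_succ_cases hPA hi with hia | rfl
      · exact ha i hia hiL
      · exact H _ hiL fun i' hi' =>
          ha i' ((Aux.mlt_succ_iff hPA).mp hi') (Aux.mlt_of_lt_succ_of_lt hPA hi' hiL)
    intro l hl
    exact (decodeψ l).mp (hInd ψ 2 v base step l) l (Aux.mle_refl hPA l) hl
  · intro hO s hfin h0 hstep j hj
    refine hO s hfin (fun j' hj' hpre => ?_) j hj
    rcases Aux.ax_zero_or_succ hPA j' with rfl | ⟨i, rfl⟩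
    · exact h0
    · exact hstep i hj' (hpre i (Aux.mle_refl hPA (N.succ i)))


end CTPaper
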